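/- The information matrices M of the Poisson-Gamma model and M_Po of the Poisson model have the same rank: rank(M) = rank(M_Po). -/

import Mathlib

open Matrix Real Finset

/-- The information matrices of the Poisson-Gamma model and of the Poisson model have
the same rank. -/
theorem rank_poisson_gamma_eq_rank_poisson
    (a b m : ℝ) (ha : 0 < a) (hb : 0 < b) (hm : 0 < m)
    (p : ℕ) (hp : 1 ≤ p)
    (e1 : Fin p → ℝ) (he1 : e1 = fun i : Fin p => if (i : ℕ) = 0 then (1:ℝ) else 0)
    (MPo : Matrix (Fin p) (Fin p) ℝ) (hMPo : MPo.PosSemidef)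
    (M : Matrix (Fin p) (Fin p) ℝ)
    (hM : M = (a / b) • (MPo -
      (e1 ⬝ᵥ (MPo *ᵥ e1) + b / m)⁻¹ •
        (MPo * Matrix.vecMulVec e1 e1 * MPo))) :
    M.rank = MPo.rank := by
  have hq0 : (0:ℝ) ≤ e1 ⬝ᵥ MPo *ᵥ e1 := by
    have := hMPo.dotProduct_mulVec_nonneg e1
    simpa using this
  set q : ℝ := e1 ⬝ᵥ MPo *ᵥ e1 with hqdef
  set c : ℝ := q + b / m with hcdef
  have hc : 0 < c := by positivity
  set N : Matrix (Fin p) (Fin p) ℝ := 1 - c⁻¹ • vecMulVec e1 (e1 ᵥ* MPo) with hNdef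
  have hkey : vecMulVec e1 e1 * MPo = vecMulVec e1 (e1 ᵥ* MPo) := by
    ext i j
    simp [mul_apply, vecMulVec_apply, vecMul, dotProduct, Finset.mul_sum, mul_assoc]
  have hfact : M = ((a/b) • (1 : Matrix (Fin p) (Fin p) ℝ)) * (MPo * N) := by
    rw [hM, hNdef, Matrix.smul_mul, Matrix.one_mul]
    congr 1
    rw [Matrix.mul_sub, Matrix.mul_one, Matrix.mul_smul, ← hkey, Matrix.mul_assoc]
  have hNalt : N = 1 + Matrix.replicateCol Unit e1 * Matrix.replicateRow Unit ((-c⁻¹) • (e1 ᵥ* MPo)) := by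
    rw [← Matrix.vecMulVec_eq, hNdef]
    ext i j
    simp [vecMulVec_apply]
    ring
  have hdetN : N.det = (b / m) / c := by
    rw [hNalt, Matrix.det_one_add_replicateCol_mul_replicateRow]
    have : ((-c⁻¹) • (e1 ᵥ* MPo)) ⬝ᵥ e1 = -c⁻¹ * q := by
      rw [smul_dotProduct, ← Matrix.dotProduct_mulVec, ← hqdef]
      simp [smul_eq_mul]
    rw [this, hcdef]
    have hmne : m ≠ 0 := hm.ne'
    have h1 : q + b / m ≠ 0 := by positivity
    field_simp
    ring
  have hdetN' : IsUnit N.det := by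
    rw [hdetN]
    exact (isUnit_iff_ne_zero).2 (by positivity)
  have hdetS : IsUnit ((a/b) • (1 : Matrix (Fin p) (Fin p) ℝ)).det := by
    rw [Matrix.det_smul, Matrix.det_one]
    exact (isUnit_iff_ne_zero).2 (by positivity)
  rw [hfact, Matrix.rank_mul_eq_right_of_isUnit_det _ _ hdetS,
    Matrix.rank_mul_eq_left_of_isUnit_det _ _ hdetN']
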